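/- Let c₁, c₂, u, τ be real numbers with ω = √(1 + u²), and suppose sin(τω) ≠ 0 and cos(τω) ≠ 0. Let U = Matrix.exp( −(τ·I) • (σx + u·σz) ). Then Tr( U * (c₁·σx + c₂·σy) * Uᴴ * σz ) = 0 if and only if c₂·√(1+u²) = −c₁·u·tan(τ·√(1+u²)). (This is the junction condition determining the duration of an interior bang arc of an extremal.) -/

import Mathlib

open Matrix

noncomputable section

/-- Pauli matrix σx. -/
def σx : Matrix (Fin 2) (Fin 2) ℂ := !![0, 1; 1, 0]

/-- Pauli matrix σy. -/
def σy : Matrix (Fin 2) (Fin 2) ℂ := !![0, -Complex.I; Complex.I, 0]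

/-- Pauli matrix σz. -/
def σz : Matrix (Fin 2) (Fin 2) ℂ := !![1, 0; 0, -1]

lemma exp_bang (u τ ω : ℝ) (hω : ω = Real.sqrt (1 + u ^ 2)) :
    NormedSpace.exp ((-(τ : ℂ) * Complex.I) • (σx + (u : ℂ) • σz)) =
      !![(Real.cos (τ*ω) : ℂ) - Complex.I * u * Real.sin (τ*ω) / ω,
          -(Complex.I * Real.sin (τ*ω) / ω);
         -(Complex.I * Real.sin (τ*ω) / ω),
          (Real.cos (τ*ω) : ℂ) + Complex.I * u * Real.sin (τ*ω) / ω] := by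
  have h1u : (0:ℝ) < 1 + u ^ 2 := by positivity
  have hω2 : ω ^ 2 = 1 + u ^ 2 := by rw [hω]; exact Real.sq_sqrt h1u.le
  have hωpos : 0 < ω := by rw [hω]; exact Real.sqrt_pos.2 h1u
  have hωu : 0 < ω - u := by nlinarith
  have hωC : (ω : ℂ) ≠ 0 := by exact_mod_cast hωpos.ne'
  have hω2C : (ω : ℂ) ^ 2 = 1 + (u:ℂ) ^ 2 := by exact_mod_cast hω2
  set P : Matrix (Fin 2) (Fin 2) ℂ := !![1, (u:ℂ) - ω; (ω:ℂ) - u, 1] with hP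
  have hdet : P.det = ((2*ω*(ω-u) : ℝ) : ℂ) := by
    simp [hP, Matrix.det_fin_two_of]
    push_cast
    linear_combination -hω2C
  have hdet0 : P.det ≠ 0 := by
    rw [hdet]
    exact_mod_cast (by positivity : (2*ω*(ω-u) : ℝ) ≠ 0)
  have hUnit : IsUnit P := (Matrix.isUnit_iff_isUnit_det P).2 (isUnit_iff_ne_zero.2 hdet0)
  have hPinv : P * P⁻¹ = 1 := Matrix.mul_nonsing_inv P (isUnit_iff_ne_zero.2 hdet0)
  set D : Matrix (Fin 2) (Fin 2) ℂ :=
    Matrix.diagonal ![-(τ*ω : ℝ) * Complex.I, (τ*ω : ℝ) * Complex.I] with hD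
  have hAP : ((-(τ : ℂ) * Complex.I) • (σx + (u : ℂ) • σz)) * P = P * D := by
    ext i j
    fin_cases i <;> fin_cases j
    · simp [hP, hD, σx, σz, Matrix.mul_apply, Fin.sum_univ_two, Matrix.diagonal]
      push_cast; ring
    · simp [hP, hD, σx, σz, Matrix.mul_apply, Fin.sum_univ_two, Matrix.diagonal]
      push_cast; linear_combination ((τ:ℂ) * Complex.I) * hω2C
    · simp [hP, hD, σx, σz, Matrix.mul_apply, Fin.sum_univ_two, Matrix.diagonal]
      push_cast; linear_combination ((τ:ℂ) * Complex.I) * hω2C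
    · simp [hP, hD, σx, σz, Matrix.mul_apply, Fin.sum_univ_two, Matrix.diagonal]
      push_cast; ring
  have hA : ((-(τ : ℂ) * Complex.I) • (σx + (u : ℂ) • σz)) = P * D * P⁻¹ := by
    calc ((-(τ : ℂ) * Complex.I) • (σx + (u : ℂ) • σz))
        = ((-(τ : ℂ) * Complex.I) • (σx + (u : ℂ) • σz)) * (P * P⁻¹) := by
          rw [hPinv, Matrix.mul_one]
      _ = (P * D) * P⁻¹ := by rw [← Matrix.mul_assoc, hAP]
  rw [hA, Matrix.exp_conj P D hUnit, Matrix.exp_diagonal]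
  set e₁ : ℂ := Complex.exp (-(τ*ω : ℝ) * Complex.I) with he₁
  set e₂ : ℂ := Complex.exp ((τ*ω : ℝ) * Complex.I) with he₂
  have hv : NormedSpace.exp ![-(τ*ω : ℝ) * Complex.I, (τ*ω : ℝ) * Complex.I] = ![e₁, e₂] := by
    rw [Pi.exp_def]
    funext i
    fin_cases i <;> simp [← Complex.exp_eq_exp_ℂ, he₁, he₂]
  rw [hv]
  have he1 : e₁ = (Real.cos (τ*ω) : ℂ) - (Real.sin (τ*ω) : ℂ) * Complex.I := by
    have h : (-(((τ*ω : ℝ)) : ℂ)) * Complex.I = ((-(τ*ω) : ℝ) : ℂ) * Complex.I := by push_cast; ring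
    rw [he₁, h, Complex.exp_mul_I, ← Complex.ofReal_cos, ← Complex.ofReal_sin,
      Real.cos_neg, Real.sin_neg]
    push_cast; ring
  have he2 : e₂ = (Real.cos (τ*ω) : ℂ) + (Real.sin (τ*ω) : ℂ) * Complex.I := by
    rw [he₂, Complex.exp_mul_I, ← Complex.ofReal_cos, ← Complex.ofReal_sin]
  set T : Matrix (Fin 2) (Fin 2) ℂ :=
      !![(Real.cos (τ*ω) : ℂ) - Complex.I * u * Real.sin (τ*ω) / ω,
          -(Complex.I * Real.sin (τ*ω) / ω);
         -(Complex.I * Real.sin (τ*ω) / ω),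
          (Real.cos (τ*ω) : ℂ) + Complex.I * u * Real.sin (τ*ω) / ω] with hT
  have hTP : T * P = P * Matrix.diagonal ![e₁, e₂] := by
    ext i j
    fin_cases i <;> fin_cases j
    · simp [hT, hP, Matrix.mul_apply, Fin.sum_univ_two, Matrix.diagonal, he1, he2]
      field_simp
      ring
    · simp [hT, hP, Matrix.mul_apply, Fin.sum_univ_two, Matrix.diagonal, he1, he2]
      field_simp
      linear_combination (Complex.I * Complex.sin ((τ:ℂ) * ω)) * hω2C
    · simp [hT, hP, Matrix.mul_apply, Fin.sum_univ_two, Matrix.diagonal, he1, he2]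
      field_simp
      linear_combination (Complex.I * Complex.sin ((τ:ℂ) * ω)) * hω2C
    · simp [hT, hP, Matrix.mul_apply, Fin.sum_univ_two, Matrix.diagonal, he1, he2]
      field_simp
      ring
  calc P * Matrix.diagonal ![e₁, e₂] * P⁻¹ = (T * P) * P⁻¹ := by rw [hTP]
    _ = T * (P * P⁻¹) := by rw [Matrix.mul_assoc]
    _ = T := by rw [hPinv, Matrix.mul_one]


/-- The junction condition determining the duration of an interior bang arc of an
extremal: the switching function vanishes at the end of the arc iff
`c₂·√(1+u²) = −c₁·u·tan(τ·√(1+u²))`. -/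
theorem junction_condition (c₁ c₂ u τ : ℝ) (ω : ℝ) (hω : ω = Real.sqrt (1 + u ^ 2))
    (hsin : Real.sin (τ * ω) ≠ 0) (hcos : Real.cos (τ * ω) ≠ 0)
    (U : Matrix (Fin 2) (Fin 2) ℂ)
    (hU : U = NormedSpace.exp ((-(τ : ℂ) * Complex.I) • (σx + (u : ℂ) • σz))) :
    Matrix.trace (U * ((c₁ : ℂ) • σx + (c₂ : ℂ) • σy) * Uᴴ * σz) = 0 ↔
      c₂ * Real.sqrt (1 + u ^ 2) = -(c₁ * u * Real.tan (τ * Real.sqrt (1 + u ^ 2))) := by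
  have h1u : (0:ℝ) < 1 + u ^ 2 := by positivity
  have hω2 : ω ^ 2 = 1 + u ^ 2 := by rw [hω]; exact Real.sq_sqrt h1u.le
  have hωpos : 0 < ω := by rw [hω]; exact Real.sqrt_pos.2 h1u
  have hωC : (ω : ℂ) ≠ 0 := by exact_mod_cast hωpos.ne'
  have hω2C : (ω : ℂ) ^ 2 = 1 + (u:ℂ) ^ 2 := by exact_mod_cast hω2
  rw [hU, exp_bang u τ ω hω, ← hω]
  set c : ℝ := Real.cos (τ * ω) with hc
  set s : ℝ := Real.sin (τ * ω) with hs
  have hUH : (!![(c : ℂ) - Complex.I * u * s / ω, -(Complex.I * s / ω);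
          -(Complex.I * s / ω), (c : ℂ) + Complex.I * u * s / ω])ᴴ
      = !![(c : ℂ) + Complex.I * u * s / ω, Complex.I * s / ω;
          Complex.I * s / ω, (c : ℂ) - Complex.I * u * s / ω] := by
    ext i j
    fin_cases i <;> fin_cases j <;>
      simp [Matrix.conjTranspose_apply, map_sub, map_add, map_div₀, _root_.map_mul,
        Complex.conj_I, Complex.conj_ofReal] <;> ring
  have key : Matrix.trace
      (!![(c : ℂ) - Complex.I * u * s / ω, -(Complex.I * s / ω);
          -(Complex.I * s / ω), (c : ℂ) + Complex.I * u * s / ω]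
        * ((c₁ : ℂ) • σx + (c₂ : ℂ) • σy)
        * (!![(c : ℂ) - Complex.I * u * s / ω, -(Complex.I * s / ω);
          -(Complex.I * s / ω), (c : ℂ) + Complex.I * u * s / ω])ᴴ * σz)
      = ((4 * s * (c₂ * ω * c + c₁ * u * s) / ω ^ 2 : ℝ) : ℂ) := by
    rw [hUH]
    simp only [Matrix.trace, Matrix.mul_apply, Fin.sum_univ_two, σx, σy, σz, Matrix.diag,
      Matrix.smul_apply, Matrix.add_apply, Matrix.cons_val', Matrix.cons_val_zero,
      Matrix.cons_val_one, Matrix.head_cons, Matrix.head_fin_const, Matrix.empty_val',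
      Matrix.cons_val_fin_one, smul_eq_mul]
    push_cast
    field_simp
    simp only [Complex.ext_iff, Complex.add_re, Complex.add_im, Complex.mul_re, Complex.mul_im,
      Complex.sub_re, Complex.sub_im, Complex.neg_re, Complex.neg_im, Complex.I_re, Complex.I_im,
      Complex.ofReal_re, Complex.ofReal_im, ← Complex.ofReal_pow]
    constructor
    · norm_num
      have hx : ω * ω⁻¹ = 1 := mul_inv_cancel₀ hωpos.ne'
      linear_combination (s^2*c₁*u*4 + ω*s*c₂*c*4) * (ω * ω⁻¹ + 1) * hx
    · norm_num
      right
      ring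
  rw [key, Complex.ofReal_eq_zero]
  have hωsq : (ω:ℝ) ^ 2 ≠ 0 := by positivity
  rw [div_eq_zero_iff, or_iff_left hωsq, mul_eq_zero,
    or_iff_right (by simpa using hsin : (4:ℝ) * s ≠ 0)]
  rw [Real.tan_eq_sin_div_cos, ← hc, ← hs]
  constructor
  · intro h
    rw [eq_comm, neg_eq_iff_eq_neg, eq_comm]
    field_simp
    linarith
  · intro h
    rw [eq_comm, neg_eq_iff_eq_neg, eq_comm] at h
    field_simp at h
    linarith


end
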